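/- Let v be a point in the Euclidean plane, let ι be a finite index type, and let a, b : ι → ℝ² be such that for every i the points v, a i, b i are affinely independent, and for all i ≠ j the interiors of the triangles convexHull{v, a i, b i} and convexHull{v, a j, b j} are disjoint. Then the number of indices i with ∠ (a i) v (b i) > π/3 is at most 5. -/

import Mathlib

open MeasureTheory Set Metric InnerProductGeometry Real

namespace Stmt13Aux

lemma sector_subset_source {R θ : ℝ} (hθ : θ ≤ π) :
    (Ioo (0:ℝ) R ×ˢ Ioo (0:ℝ) θ) ⊆ Complex.polarCoord.symm.source := by
  rw [OpenPartialHomeomorph.symm_source, Complex.polarCoord_target]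
  exact Set.prod_mono Ioo_subset_Ioi_self
    (Ioo_subset_Ioo (by linarith [Real.pi_pos]) hθ)

lemma sector_open {R θ : ℝ} (hθ : θ ≤ π) :
    IsOpen (Complex.polarCoord.symm '' (Ioo (0:ℝ) R ×ˢ Ioo (0:ℝ) θ)) :=
  Complex.polarCoord.symm.isOpen_image_of_subset_source (isOpen_Ioo.prod isOpen_Ioo)
    (sector_subset_source hθ)

lemma sector_ball {R θ : ℝ} :
    Complex.polarCoord.symm '' (Ioo (0:ℝ) R ×ˢ Ioo (0:ℝ) θ) ⊆ ball (0:ℂ) R := by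
  rintro z ⟨⟨r, φ⟩, ⟨hr, -⟩, rfl⟩
  rw [mem_ball_zero_iff, Complex.norm_polarCoord_symm]
  calc |r| = r := abs_of_pos hr.1
    _ < R := hr.2

lemma sector_vol {R θ : ℝ} (hR : 0 < R) (hθ0 : 0 < θ) (hθπ : θ ≤ π) :
    volume (Complex.polarCoord.symm '' (Ioo (0:ℝ) R ×ˢ Ioo (0:ℝ) θ))
      = ENNReal.ofReal (θ * R ^ 2 / 2) := by
  set s : Set (ℝ × ℝ) := Ioo (0:ℝ) R ×ˢ Ioo (0:ℝ) θ with hsdef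
  have hsub : s ⊆ Complex.polarCoord.symm.source := sector_subset_source hθπ
  set S := Complex.polarCoord.symm '' s with hSdef
  have hSopen : IsOpen S := sector_open hθπ
  have hmeas : MeasurableSet S := hSopen.measurableSet
  have hfin : volume S ≠ ⊤ :=
    ((measure_mono (sector_ball (R := R) (θ := θ))).trans_lt measure_ball_lt_top).ne
  have h1 : (volume S).toReal = θ * R ^ 2 / 2 := by
    rw [← measureReal_def, ← integral_indicator_one hmeas,
      ← Complex.integral_comp_polarCoord_symm (S.indicator 1)]
    have h3 : ∀ p ∈ polarCoord.target,
        p.1 • S.indicator (1 : ℂ → ℝ) (Complex.polarCoord.symm p)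
          = s.indicator (fun q : ℝ × ℝ => q.1) p := by
      intro p hp
      by_cases hps : p ∈ s
      · rw [indicator_of_mem hps, indicator_of_mem (mem_image_of_mem _ hps)]
        simp
      · rw [indicator_of_notMem hps, indicator_of_notMem, smul_zero]
        rintro ⟨q, hq, hqp⟩
        exact hps (by
          rwa [Complex.polarCoord.symm.injOn (hsub hq) hp hqp] at hq)
    rw [setIntegral_congr_fun polarCoord.open_target.measurableSet h3,
      setIntegral_indicator (isOpen_Ioo.prod isOpen_Ioo).measurableSet,
      inter_eq_self_of_subset_right (by
        rw [polarCoord_target]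
        exact Set.prod_mono Ioo_subset_Ioi_self
          (Ioo_subset_Ioo (by linarith [Real.pi_pos]) hθπ))]
    rw [Measure.volume_eq_prod]
    have h7 := MeasureTheory.setIntegral_prod_mul (μ := (volume : Measure ℝ)) (ν := volume)
      (fun x : ℝ => x) (fun _ : ℝ => (1:ℝ)) (Ioo (0:ℝ) R) (Ioo (0:ℝ) θ)
    simp only [mul_one] at h7
    rw [h7]
    have h5 : ∫ x in Ioo (0:ℝ) R, x = R ^ 2 / 2 := by
      rw [← integral_Ioc_eq_integral_Ioo, ← intervalIntegral.integral_of_le hR.le,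
        integral_id]
      norm_num
    have h6 : ∫ _y in Ioo (0:ℝ) θ, (1:ℝ) = θ := by
      rw [setIntegral_const, Real.volume_real_Ioo_of_le (by linarith), smul_eq_mul, mul_one]
      norm_num
    rw [h5, h6]; ring
  rw [← ENNReal.ofReal_toReal hfin, h1]


lemma sector_mem_hull {A B θ r φ : ℝ} (hA : 0 < A) (hB : 0 < B)
    (hθπ : θ < π) (hφ0 : 0 < φ) (hφθ : φ < θ)
    (hr0 : 0 < r) (hrR : r ≤ Real.sin θ / (2 * (A⁻¹ + B⁻¹))) :
    Complex.polarCoord.symm (r, φ) ∈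
      convexHull ℝ ({0, (A:ℂ), (B:ℂ) * Complex.exp (θ * Complex.I)} : Set ℂ) := by
  have hθ0 : 0 < θ := lt_trans hφ0 hφθ
  have hsθ : 0 < Real.sin θ := Real.sin_pos_of_pos_of_lt_pi hθ0 hθπ
  have hsφ : 0 < Real.sin φ := Real.sin_pos_of_pos_of_lt_pi hφ0 (hφθ.trans hθπ)
  have hsθφ : 0 < Real.sin (θ - φ) :=
    Real.sin_pos_of_pos_of_lt_pi (by linarith) (by linarith)
  set b : ℂ := (B:ℂ) * Complex.exp (θ * Complex.I) with hbdef
  set s0 : ℝ := r * Real.sin (θ - φ) / (A * Real.sin θ) with hs0def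
  set t0 : ℝ := r * Real.sin φ / (B * Real.sin θ) with ht0def
  have hs0 : 0 < s0 := div_pos (mul_pos hr0 hsθφ) (mul_pos hA hsθ)
  have ht0 : 0 < t0 := div_pos (mul_pos hr0 hsφ) (mul_pos hB hsθ)
  have hd : (0:ℝ) < A⁻¹ + B⁻¹ := by positivity
  have hr2 : r * (A⁻¹ + B⁻¹) ≤ Real.sin θ / 2 := by
    have h := (le_div_iff₀ (by positivity : (0:ℝ) < 2 * (A⁻¹ + B⁻¹))).mp hrR
    nlinarith
  have hsum : s0 + t0 ≤ 1 := by
    have e1 : s0 ≤ r * 1 / (A * Real.sin θ) := by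
      rw [hs0def]; gcongr; exact Real.sin_le_one _
    have e2 : t0 ≤ r * 1 / (B * Real.sin θ) := by
      rw [ht0def]; gcongr; exact Real.sin_le_one _
    have e3 : r * 1 / (A * Real.sin θ) + r * 1 / (B * Real.sin θ)
        = r * (A⁻¹ + B⁻¹) / Real.sin θ := by
      field_simp
    have e4 : r * (A⁻¹ + B⁻¹) / Real.sin θ ≤ (Real.sin θ / 2) / Real.sin θ := by
      gcongr
    have e5 : (Real.sin θ / 2) / Real.sin θ = 1/2 := by
      field_simp
    rw [e5] at e4
    linarith
  have hz : Complex.polarCoord.symm (r, φ) = s0 • (A:ℂ) + t0 • b := by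
    rw [Complex.polarCoord_symm_apply, hbdef, Complex.exp_mul_I,
      ← Complex.ofReal_cos, ← Complex.ofReal_sin]
    simp only [Complex.real_smul, hs0def, ht0def, Real.sin_sub, Complex.ext_iff,
      Complex.add_re, Complex.add_im, Complex.mul_re, Complex.mul_im,
      Complex.ofReal_re, Complex.ofReal_im, Complex.I_re, Complex.I_im]
    constructor <;> (field_simp; try ring)
  have hmem0 : (0:ℂ) ∈ ({0, (A:ℂ), b} : Set ℂ) := Set.mem_insert _ _
  have hmemA : (A:ℂ) ∈ ({0, (A:ℂ), b} : Set ℂ) := by simp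
  have hmemb : b ∈ ({0, (A:ℂ), b} : Set ℂ) := by simp
  have hc0 : 0 < s0 + t0 := by linarith
  set p : ℂ := (s0/(s0+t0)) • (A:ℂ) + (t0/(s0+t0)) • b with hpdef
  have hp : p ∈ convexHull ℝ ({0, (A:ℂ), b} : Set ℂ) :=
    segment_subset_convexHull hmemA hmemb
      ⟨s0/(s0+t0), t0/(s0+t0), by positivity, by positivity, by field_simp, rfl⟩
  have hzseg : Complex.polarCoord.symm (r, φ) ∈ segment ℝ (0:ℂ) p := by
    refine ⟨1 - (s0 + t0), s0 + t0, by linarith, by linarith, by ring, ?_⟩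
    rw [hz, hpdef, smul_zero, zero_add, smul_add, smul_smul, smul_smul,
      mul_div_cancel₀ _ (ne_of_gt hc0), mul_div_cancel₀ _ (ne_of_gt hc0)]
  exact (convex_convexHull ℝ _).segment_subset
    (subset_convexHull ℝ _ hmem0) hp hzseg

lemma key0 {A B θ : ℝ} (hA : 0 < A) (hB : 0 < B) (hθ1 : π/3 < θ) (hθ2 : θ < π) :
    ∃ R : ℝ, 0 < R ∧
      ENNReal.ofReal (π/6 * R^2) < volume (interior (convexHull ℝ
        ({0, (A:ℂ), (B:ℂ) * Complex.exp (θ * Complex.I)} : Set ℂ)) ∩ ball (0:ℂ) R) := by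
  have hπ := Real.pi_pos
  have hθ0 : 0 < θ := by linarith
  have hsθ : 0 < Real.sin θ := Real.sin_pos_of_pos_of_lt_pi hθ0 hθ2
  have hd : (0:ℝ) < A⁻¹ + B⁻¹ := by positivity
  set R := Real.sin θ / (2 * (A⁻¹ + B⁻¹)) with hRdef
  have hR0 : 0 < R := by positivity
  refine ⟨R, hR0, ?_⟩
  set S := Complex.polarCoord.symm '' (Ioo (0:ℝ) R ×ˢ Ioo (0:ℝ) θ) with hSdef
  have hSsub : S ⊆ convexHull ℝ ({0, (A:ℂ), (B:ℂ) * Complex.exp (θ * Complex.I)} : Set ℂ) := by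
    rintro z ⟨⟨r, φ⟩, ⟨⟨hr0, hrR⟩, ⟨hφ0, hφθ⟩⟩, rfl⟩
    exact sector_mem_hull hA hB hθ2 hφ0 hφθ hr0 hrR.le
  have hSsub2 : S ⊆ interior (convexHull ℝ
      ({0, (A:ℂ), (B:ℂ) * Complex.exp (θ * Complex.I)} : Set ℂ)) ∩ ball (0:ℂ) R :=
    Set.subset_inter (interior_maximal hSsub (sector_open hθ2.le)) sector_ball
  calc ENNReal.ofReal (π/6 * R^2) < ENNReal.ofReal (θ * R^2 / 2) := by
        rw [ENNReal.ofReal_lt_ofReal_iff (by positivity)]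
        nlinarith [pow_pos hR0 2]
    _ = volume S := (sector_vol hR0 hθ0 hθ2.le).symm
    _ ≤ _ := measure_mono hSsub2

end Stmt13Aux


namespace Stmt13Aux2

lemma angle_ofReal {A : ℝ} (hA : 0 < A) {y : ℂ} (hy : y ≠ 0) :
    InnerProductGeometry.angle (A:ℂ) y = |y.arg| := by
  have hAy : ‖y‖ ≠ 0 := norm_ne_zero_iff.mpr hy
  have hay : (0:ℝ) < ‖y‖ := norm_pos_iff.mpr hy
  rw [InnerProductGeometry.angle, Complex.inner]
  have h1 : (y * (starRingEnd ℂ) (A:ℂ)).re = A * y.re := by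
    rw [Complex.conj_ofReal]
    simp [Complex.mul_re, mul_comm]
  have h2 : ‖(A:ℂ)‖ = A := by
    rw [Complex.norm_of_nonneg hA.le]
  rw [h1, h2]
  have h4 : A * y.re / (A * ‖y‖) = Real.cos y.arg := by
    rw [Complex.cos_arg hy]
    field_simp
  rw [h4, ← Real.cos_abs, Real.arccos_cos (abs_nonneg _)]
  rw [abs_le]
  exact ⟨(Complex.neg_pi_lt_arg y).le, Complex.arg_le_pi y⟩

lemma key {a b : ℂ} (ha : a ≠ 0) (hnr : ∀ r : ℝ, b ≠ r • a)
    (hang : π/3 < InnerProductGeometry.angle a b) :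
    ∃ R : ℝ, 0 < R ∧
      ENNReal.ofReal (π/6 * R^2) < volume (interior (convexHull ℝ
        ({0, a, b} : Set ℂ)) ∩ ball (0:ℂ) R) := by
  have hb : b ≠ 0 := by
    intro h
    exact hnr 0 (by simp [h])
  have hA : (0:ℝ) < ‖a‖ := norm_pos_iff.mpr ha
  have hB : (0:ℝ) < ‖b‖ := norm_pos_iff.mpr hb
  set θ := InnerProductGeometry.angle a b with hθdef
  have hangπ : θ < π := by
    rcases lt_or_eq_of_le (angle_le_pi a b) with h | h
    · exact h
    · rcases angle_eq_pi_iff.mp h with ⟨-, r, -, hba⟩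
      exact absurd hba (hnr r)
  -- rotation carrying `a` to the positive real axis
  set c : ℂ := (starRingEnd ℂ) a / ‖a‖ with hcdef
  have hcabs : ‖c‖ = 1 := by
    rw [hcdef, norm_div, Complex.norm_conj, Complex.norm_of_nonneg hA.le,
      div_self (ne_of_gt hA)]
  set u : Circle := ⟨c, mem_sphere_zero_iff_norm.mpr
    (by rw [hcabs])⟩ with hudef
  set G1 : ℂ ≃ₗᵢ[ℝ] ℂ := rotation u with hG1def
  have hG1app : ∀ z, G1 z = c * z := fun z => rotation_apply u z
  have hG1a : G1 a = ((‖a‖ : ℝ) : ℂ) := by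
    rw [hG1app, hcdef, div_mul_eq_mul_div, Complex.conj_mul', sq,
      mul_div_assoc, div_self (Complex.ofReal_ne_zero.mpr (ne_of_gt hA)), mul_one]
  have hG1b : G1 b ≠ 0 := by
    rw [hG1app]
    exact mul_ne_zero (by rw [← norm_ne_zero_iff, hcabs]; norm_num) hb
  have habsG1b : ‖G1 b‖ = ‖b‖ := by
    rw [hG1app, norm_mul, hcabs, one_mul]
  set ψ := (G1 b).arg with hψdef
  have hψabs : |ψ| = θ := by
    rw [hθdef, ← LinearIsometry.angle_map G1.toLinearIsometry a b]
    have h5 : ∀ z, G1.toLinearIsometry z = G1 z := fun _ => rfl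
    rw [h5, h5, hG1a, angle_ofReal hA hG1b]
  have hGb1 : G1 b = ((‖b‖ : ℝ) : ℂ) * Complex.exp (ψ * Complex.I) := by
    conv_lhs => rw [← Complex.norm_mul_exp_arg_mul_I (G1 b)]
    rw [habsG1b]
  have hθ0 : 0 < θ := lt_trans (by positivity) hang
  obtain ⟨G, hGa, hGb⟩ : ∃ G : ℂ ≃ₗᵢ[ℝ] ℂ, G a = ((‖a‖ : ℝ) : ℂ) ∧
      G b = ((‖b‖ : ℝ) : ℂ) * Complex.exp (θ * Complex.I) := by
    rcases le_or_gt 0 ψ with hψ | hψ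
    · have : ψ = θ := by rw [← hψabs, abs_of_nonneg hψ]
      exact ⟨G1, hG1a, by rw [hGb1, this]⟩
    · have hψθ : -ψ = θ := by rw [← hψabs, abs_of_neg hψ]
      refine ⟨G1.trans Complex.conjLIE, ?_, ?_⟩
      · have : Complex.conjLIE (G1 a) = ((‖a‖ : ℝ) : ℂ) := by
          rw [hG1a]; exact Complex.conj_ofReal _
        exact this
      · show Complex.conjLIE (G1 b) = _
        rw [hGb1]
        show (starRingEnd ℂ) (_ * _) = _
        rw [map_mul, Complex.conj_ofReal, ← Complex.exp_conj, map_mul,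
          Complex.conj_ofReal, Complex.conj_I]
        rw [← hψθ]
        push_cast
        ring_nf
  obtain ⟨R, hR0, hRvol⟩ := Stmt13Aux.key0 hA hB hang hangπ
  refine ⟨R, hR0, ?_⟩
  have himg : G '' (interior (convexHull ℝ ({0, a, b} : Set ℂ)) ∩ ball (0:ℂ) R)
      = interior (convexHull ℝ ({0, ((‖a‖ : ℝ) : ℂ),
          ((‖b‖ : ℝ) : ℂ) * Complex.exp (θ * Complex.I)} : Set ℂ)) ∩ ball (0:ℂ) R := by
    rw [Set.image_inter G.injective]
    congr 1
    · have e1 : ⇑G '' interior (convexHull ℝ ({0, a, b} : Set ℂ))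
          = interior (⇑G '' convexHull ℝ ({0, a, b} : Set ℂ)) := by
        have := G.toHomeomorph.image_interior (convexHull ℝ ({0, a, b} : Set ℂ))
        simpa using this
      rw [e1]
      congr 1
      have e2 : ⇑G '' convexHull ℝ ({0, a, b} : Set ℂ)
          = convexHull ℝ (⇑G '' ({0, a, b} : Set ℂ)) :=
        (IsLinearMap.mk (map_add G) (map_smul G)).image_convexHull _
      rw [e2]
      congr 1
      rw [Set.image_insert_eq, Set.image_insert_eq, Set.image_singleton, map_zero, hGa, hGb]
    · rw [G.image_ball, map_zero]
  have hmeasX : MeasurableSet (interior (convexHull ℝ ({0, a, b} : Set ℂ)) ∩ ball (0:ℂ) R) :=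
    (isOpen_interior.inter isOpen_ball).measurableSet
  have hvol : volume (interior (convexHull ℝ ({0, a, b} : Set ℂ)) ∩ ball (0:ℂ) R)
      = volume (G '' (interior (convexHull ℝ ({0, a, b} : Set ℂ)) ∩ ball (0:ℂ) R)) := by
    rw [G.image_eq_preimage_symm]
    exact (G.symm.measurePreserving.measure_preimage hmeasX.nullMeasurableSet).symm
  rw [hvol, himg]
  exact hRvol

end Stmt13Aux2


section Stmt13Main

open MeasureTheory Set Metric InnerProductGeometry Real

variable {E' : Type*} [NormedAddCommGroup E'] [NormedSpace ℝ E']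

lemma Stmt13Aux.lie_img {E₁ E₂ : Type*} [NormedAddCommGroup E₁] [NormedAddCommGroup E₂]
    [NormedSpace ℝ E₁] [NormedSpace ℝ E₂] (G : E₁ ≃ₗᵢ[ℝ] E₂) (s : Set E₁) :
    ⇑G '' interior (convexHull ℝ s) = interior (convexHull ℝ (⇑G '' s)) := by
  have h1 := G.toHomeomorph.image_interior (convexHull ℝ s)
  simp only [LinearIsometryEquiv.coe_toHomeomorph] at h1
  rw [h1, (IsLinearMap.mk (map_add G) (map_smul G)).image_convexHull]

lemma Stmt13Aux.trans_img (v : E') (s : Set E') :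
    (fun x => v + x) '' interior (convexHull ℝ s)
      = interior (convexHull ℝ ((fun x => v + x) '' s)) := by
  have h1 := (Homeomorph.addLeft v).image_interior (convexHull ℝ s)
  simp only [Homeomorph.coe_addLeft] at h1
  have h2 : ⇑((AffineEquiv.constVAdd ℝ E' v).toAffineMap) = fun x : E' => v + x := by
    funext x
    simp [AffineEquiv.constVAdd]
    rfl
  have h3 := (AffineEquiv.constVAdd ℝ E' v).toAffineMap.image_convexHull s
  rw [h2] at h3
  rw [h1, h3]

end Stmt13Main

open EuclideanGeometry

theorem stmt_13 (v : EuclideanSpace ℝ (Fin 2)) (ι : Type*) [Fintype ι]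
    (a b : ι → EuclideanSpace ℝ (Fin 2))
    (hindep : ∀ i, AffineIndependent ℝ ![v, a i, b i])
    (hdisj : ∀ i j, i ≠ j →
      Disjoint
        (interior (convexHull ℝ ({v, a i, b i} : Set (EuclideanSpace ℝ (Fin 2)))))
        (interior (convexHull ℝ ({v, a j, b j} : Set (EuclideanSpace ℝ (Fin 2)))))) :
    (Finset.univ.filter fun i => Real.pi / 3 < ∠ (a i) v (b i)).card ≤ 5 := by
  classical
  open MeasureTheory Set Metric InnerProductGeometry Real Pointwise in
  by_contra hcon
  push_neg at hcon
  obtain ⟨T, hTS, hT6⟩ := Finset.exists_subset_card_eq (show 6 ≤ _ from hcon)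
  have hTne : T.Nonempty := Finset.card_pos.mp (by rw [hT6]; norm_num)
  set F : EuclideanSpace ℝ (Fin 2) ≃ₗᵢ[ℝ] ℂ := Complex.orthonormalBasisOneI.repr.symm with hF
  set a' : ι → ℂ := fun i => F (a i - v) with ha'
  set b' : ι → ℂ := fun i => F (b i - v) with hb'
  set K : ι → Set ℂ := fun i => interior (convexHull ℝ ({0, a' i, b' i} : Set ℂ)) with hK
  set g : ℂ → EuclideanSpace ℝ (Fin 2) := fun z => v + F.symm z with hg
  have hginj : Function.Injective g := by
    intro x y h
    simp only [hg] at h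
    exact F.symm.injective (add_left_cancel h)
  have hgimg : ∀ i, g '' K i
      = interior (convexHull ℝ ({v, a i, b i} : Set (EuclideanSpace ℝ (Fin 2)))) := by
    intro i
    have h1 : g '' K i = (fun x => v + x) '' (⇑F.symm '' K i) := by
      rw [← Set.image_comp]
      rfl
    have himg2 : (fun x => v + x) '' (⇑F.symm '' ({0, a' i, b' i} : Set ℂ))
        = ({v, a i, b i} : Set (EuclideanSpace ℝ (Fin 2))) := by
      simp only [ha', hb', Set.image_insert_eq, Set.image_singleton, map_zero,
        F.symm_apply_apply]
      simp [add_sub_cancel]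
    rw [h1]
    simp only [hK]
    rw [Stmt13Aux.lie_img, Stmt13Aux.trans_img, himg2]
  have hKdisj : ∀ i j, i ≠ j → Disjoint (K i) (K j) := by
    intro i j hij
    have h := hdisj i j hij
    rw [← hgimg i, ← hgimg j] at h
    exact (Set.disjoint_image_iff hginj).mp h
  have hKopen : ∀ i, IsOpen (K i) := fun i => isOpen_interior
  have hπ := Real.pi_pos
  -- per-index radii
  have hexist : ∀ i : ι, ∃ R : ℝ, 0 < R ∧ (i ∈ T →
      ENNReal.ofReal (π/6 * R^2) < volume (K i ∩ ball (0:ℂ) R)) := by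
    intro i
    by_cases hi : i ∈ T
    · have hnc : ¬ Collinear ℝ ({v, a i, b i} : Set (EuclideanSpace ℝ (Fin 2))) :=
        affineIndependent_iff_not_collinear_set.mp (hindep i)
      have hav : a i - v ≠ 0 := by
        intro h
        apply hnc
        have hv : a i = v := by rwa [sub_eq_zero] at h
        rw [hv]
        exact (collinear_pair ℝ v (b i)).subset (by simp [Set.insert_subset_iff])
      have ha0 : a' i ≠ 0 := by
        simp only [ha']
        intro h
        exact hav (by simpa using F.map_eq_zero_iff.mp h)
      have hnr : ∀ r : ℝ, b' i ≠ r • a' i := by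
        intro r h
        apply hnc
        have h2 : b i - v = r • (a i - v) := by
          apply F.injective
          rw [LinearIsometryEquiv.map_smul]
          simp only [ha', hb'] at h
          exact h
        rw [collinear_iff_of_mem (Set.mem_insert v _)]
        refine ⟨a i - v, ?_⟩
        intro p hp
        rcases hp with rfl | hp
        · exact ⟨0, by simp⟩
        rcases hp with rfl | hp
        · exact ⟨1, by simp⟩
        rcases hp with rfl
        · exact ⟨r, by rw [← h2]; simp⟩
      have hangT : π/3 < InnerProductGeometry.angle (a' i) (b' i) := by
        have hmem := (Finset.mem_filter.mp (hTS hi)).2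
        have h5 := LinearIsometry.angle_map F.toLinearIsometry (a i - v) (b i - v)
        have h6 : ∀ z, F.toLinearIsometry z = F z := fun _ => rfl
        rw [h6, h6] at h5
        rw [ha', hb', h5]
        exact hmem
      obtain ⟨R, hR0, hRv⟩ := Stmt13Aux2.key ha0 hnr hangT
      exact ⟨R, hR0, fun _ => hRv⟩
    · exact ⟨1, one_pos, fun h => absurd h hi⟩
  choose R hR0 hRvol using hexist
  set r0 : ℝ := T.inf' hTne R with hr0
  have hr0pos : 0 < r0 := by
    rw [hr0, Finset.lt_inf'_iff]
    exact fun i _ => hR0 i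
  set U : ι → Set ℂ := fun i => (r0 / R i) • (K i ∩ ball (0:ℂ) (R i)) with hU
  have hc1 : ∀ i ∈ T, 0 < r0 / R i := fun i _ => div_pos hr0pos (hR0 i)
  have hc2 : ∀ i ∈ T, r0 / R i ≤ 1 := fun i hi =>
    (div_le_one (hR0 i)).mpr (Finset.inf'_le R hi)
  have hUopen : ∀ i ∈ T, IsOpen (U i) := by
    intro i hi
    have h := isOpenMap_smul₀ (ne_of_gt (hc1 i hi)) (K i ∩ ball (0:ℂ) (R i))
      ((hKopen i).inter isOpen_ball)
    rwa [Set.image_smul] at h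
  have hUK : ∀ i ∈ T, U i ⊆ K i := by
    intro i hi
    have hsub : (r0 / R i) • K i ⊆ K i := by
      apply interior_maximal
      · rintro z ⟨w, hw, rfl⟩
        exact (convex_convexHull ℝ _).smul_mem_of_zero_mem
          (subset_convexHull ℝ _ (Set.mem_insert _ _)) (interior_subset hw)
          ⟨(hc1 i hi).le, hc2 i hi⟩
      · have h := isOpenMap_smul₀ (ne_of_gt (hc1 i hi)) (K i) (hKopen i)
        rwa [Set.image_smul] at h
    exact (Set.smul_set_mono Set.inter_subset_left).trans hsub
  have hUball : ∀ i ∈ T, U i ⊆ ball (0:ℂ) r0 := by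
    intro i hi
    have h1 : U i ⊆ (r0 / R i) • ball (0:ℂ) (R i) :=
      Set.smul_set_mono Set.inter_subset_right
    rw [smul_ball (ne_of_gt (hc1 i hi)) (0:ℂ) (R i)] at h1
    rw [smul_zero, Real.norm_of_nonneg (hc1 i hi).le,
      div_mul_cancel₀ _ (ne_of_gt (hR0 i))] at h1
    exact h1
  have hUvol : ∀ i ∈ T, ENNReal.ofReal (π/6 * r0^2) < volume (U i) := by
    intro i hi
    rw [hU]
    simp only
    rw [Measure.addHaar_smul_of_nonneg volume (hc1 i hi).le, Complex.finrank_real_complex]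
    have h2 : ENNReal.ofReal (π/6 * r0^2)
        = ENNReal.ofReal ((r0 / R i)^2) * ENNReal.ofReal (π/6 * (R i)^2) := by
      rw [← ENNReal.ofReal_mul (by positivity)]
      congr 1
      field_simp [(hR0 i).ne']
    rw [h2]
    exact (ENNReal.mul_lt_mul_iff_right ((ENNReal.ofReal_pos.mpr (pow_pos (hc1 i hi) 2)).ne')
      ENNReal.ofReal_ne_top).mpr (hRvol i hi)
  have hfinU : ∀ i ∈ T, volume (U i) ≠ ⊤ := fun i hi =>
    ((measure_mono (hUball i hi)).trans_lt measure_ball_lt_top).ne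
  have hpair : (T : Set ι).PairwiseDisjoint U := by
    intro i hi j hj hij
    exact (hKdisj i j hij).mono (hUK i hi) (hUK j hj)
  have hsum : ∑ i ∈ T, volume (U i) ≤ volume (ball (0:ℂ) r0) := by
    rw [← measure_biUnion_finset hpair (fun i hi => (hUopen i hi).measurableSet)]
    exact measure_mono (Set.iUnion₂_subset hUball)
  have hballtop : volume (ball (0:ℂ) r0) ≠ ⊤ := measure_ball_lt_top.ne
  have hballval : (volume (ball (0:ℂ) r0)).toReal = π * r0^2 := by
    rw [Complex.volume_ball]
    rw [ENNReal.toReal_mul, ENNReal.toReal_pow, ENNReal.toReal_ofReal hr0pos.le,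
      ENNReal.coe_toReal, NNReal.coe_real_pi]
    ring
  have hsumR : ∑ i ∈ T, (volume (U i)).toReal ≤ π * r0^2 := by
    rw [← ENNReal.toReal_sum hfinU, ← hballval]
    exact ENNReal.toReal_mono hballtop hsum
  have hterm : ∀ i ∈ T, π/6 * r0^2 < (volume (U i)).toReal := fun i hi =>
    (ENNReal.ofReal_lt_iff_lt_toReal (by positivity) (hfinU i hi)).mp (hUvol i hi)
  have hlt : (6 : ℝ) * (π/6 * r0^2) < ∑ i ∈ T, (volume (U i)).toReal := by
    have := Finset.sum_lt_sum_of_nonempty hTne hterm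
    rw [Finset.sum_const, hT6] at this
    simpa [nsmul_eq_mul] using this
  nlinarith [hsumR, hlt]
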